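/- With the same setup, for any policy μ that pulls each arm at least once, the constant policy that always pulls the arm O maximizing Σ_{i=1}^{T} ρ_O(i) achieves J at least as large as J(μ,T); moreover if both ρ_0 and ρ_1 are strictly increasing and Σ_{i=1}^{T} ρ_0(i) ≠ Σ_{i=1}^{T} ρ_1(i), the maximizing constant policy is the unique optimal policy among all constant policies. -/

import Mathlib

open Finset

lemma key_avg (f : ℕ → ℝ) (hf : Monotone f) {n T : ℕ} (h : n ≤ T) :
    (T : ℝ) * ∑ i ∈ Finset.range n, f (i + 1) ≤ (n : ℝ) * ∑ i ∈ Finset.range T, f (i + 1) := by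
  rcases Nat.eq_zero_or_pos n with hn | hn
  · subst hn; simp
  have hsplit : ∑ i ∈ Finset.range T, f (i + 1)
      = ∑ i ∈ Finset.range n, f (i + 1) + ∑ i ∈ Finset.Ico n T, f (i + 1) := by
    rw [Finset.range_eq_Ico, ← Finset.sum_Ico_consecutive _ (Nat.zero_le n) h, Finset.range_eq_Ico]
  have h1 : ∑ i ∈ Finset.range n, f (i + 1) ≤ n * f n := by
    calc ∑ i ∈ Finset.range n, f (i + 1) ≤ ∑ _i ∈ Finset.range n, f n := by
          apply Finset.sum_le_sum
          intro i hi
          exact hf (Nat.succ_le_of_lt (Finset.mem_range.mp hi))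
      _ = n * f n := by simp
  have h2 : ((T : ℝ) - n) * f n ≤ ∑ i ∈ Finset.Ico n T, f (i + 1) := by
    calc ((T : ℝ) - n) * f n = ∑ _i ∈ Finset.Ico n T, f n := by
          rw [Finset.sum_const, Nat.card_Ico, nsmul_eq_mul, Nat.cast_sub h]
      _ ≤ ∑ i ∈ Finset.Ico n T, f (i + 1) := by
          apply Finset.sum_le_sum
          intro i hi
          exact hf (Nat.le_succ_of_le (Finset.mem_Ico.mp hi).1)
  rw [hsplit, mul_add]
  have hTn : (0:ℝ) ≤ (T:ℝ) - n := by
    have := (Nat.cast_le (α := ℝ)).2 h; linarith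
  nlinarith [(Nat.cast_pos (α := ℝ)).2 hn]


/-- Expected cumulative reward of a 2-armed bandit policy `μ` over `T` rounds. -/
noncomputable def banditJ {T : ℕ} (ρ : Fin 2 → ℕ → ℝ) (μ : Fin T → Fin 2) : ℝ :=
  ∑ a : Fin 2, ∑ i ∈ Finset.range ({t | μ t = a} : Finset (Fin T)).card, ρ a (i + 1)

lemma banditJ_const {T : ℕ} (ρ : Fin 2 → ℕ → ℝ) (a : Fin 2) :
    banditJ ρ (fun _ : Fin T => a) = ∑ i ∈ Finset.range T, ρ a (i + 1) := by
  fin_cases a <;>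
    simp [banditJ, Fin.sum_univ_two, Finset.filter_true_of_mem, Finset.filter_false_of_mem]


/-- For any policy pulling each arm at least once, the constant policy on the arm `o`
maximizing `Σ_{i=1}^T ρ_o(i)` has at least as large a value `J`; and if both reward
sequences are strictly increasing and the two total sums differ, then `o` is the unique
optimal arm among constant policies. -/
theorem stmt1 (T : ℕ) (ρ : Fin 2 → ℕ → ℝ) (hmono : ∀ a : Fin 2, Monotone (ρ a))
    (o : Fin 2)
    (ho : ∀ a : Fin 2, ∑ i ∈ Finset.range T, ρ a (i + 1) ≤ ∑ i ∈ Finset.range T, ρ o (i + 1)) :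
    (∀ μ : Fin T → Fin 2, (∀ a : Fin 2, ∃ t, μ t = a) →
        banditJ ρ μ ≤ banditJ ρ (fun _ : Fin T => o)) ∧
    ((∀ a : Fin 2, StrictMono (ρ a)) →
      (∑ i ∈ Finset.range T, ρ 0 (i + 1)) ≠ (∑ i ∈ Finset.range T, ρ 1 (i + 1)) →
      ∀ o' : Fin 2,
        (∀ a : Fin 2, banditJ ρ (fun _ : Fin T => a) ≤ banditJ ρ (fun _ : Fin T => o')) →
        o' = o) := by
  constructor
  · intro μ _
    set n : Fin 2 → ℕ := fun a => ({t | μ t = a} : Finset (Fin T)).card with hn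
    have hsum : n 0 + n 1 = T := by
      have := Finset.card_eq_sum_card_fiberwise (f := μ) (s := (univ : Finset (Fin T)))
        (t := Finset.univ) (fun x _ => mem_univ _)
      simp only [Finset.card_univ, Fintype.card_fin, Fin.sum_univ_two] at this
      exact this.symm
    rcases Nat.eq_zero_or_pos T with hT | hT
    · subst hT
      have h0 : n 0 = 0 := by omega
      have h1 : n 1 = 0 := by omega
      simp [banditJ_const, banditJ, Fin.sum_univ_two, ← hn, h0, h1]
    rw [banditJ_const]
    rw [show banditJ ρ μ = (∑ i ∈ Finset.range (n 0), ρ 0 (i + 1))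
        + ∑ i ∈ Finset.range (n 1), ρ 1 (i + 1) from Fin.sum_univ_two _]
    have hTpos : (0:ℝ) < T := by exact_mod_cast hT
    rw [← mul_le_mul_iff_right₀ hTpos, mul_add]
    calc (T:ℝ) * ∑ i ∈ Finset.range (n 0), ρ 0 (i + 1)
          + (T:ℝ) * ∑ i ∈ Finset.range (n 1), ρ 1 (i + 1)
        ≤ (n 0 : ℝ) * ∑ i ∈ Finset.range T, ρ 0 (i + 1)
          + (n 1 : ℝ) * ∑ i ∈ Finset.range T, ρ 1 (i + 1) := by
          exact add_le_add (key_avg _ (hmono 0) (by omega)) (key_avg _ (hmono 1) (by omega))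
      _ ≤ (n 0 : ℝ) * ∑ i ∈ Finset.range T, ρ o (i + 1)
          + (n 1 : ℝ) * ∑ i ∈ Finset.range T, ρ o (i + 1) := by
          exact add_le_add (mul_le_mul_of_nonneg_left (ho 0) (Nat.cast_nonneg _))
            (mul_le_mul_of_nonneg_left (ho 1) (Nat.cast_nonneg _))
      _ = (T:ℝ) * ∑ i ∈ Finset.range T, ρ o (i + 1) := by
          rw [← add_mul]
          congr 1
          exact_mod_cast congrArg (Nat.cast (R := ℝ)) hsum
  · intro _ hne o' hopt
    have h1 : ∑ i ∈ Finset.range T, ρ o (i + 1) ≤ ∑ i ∈ Finset.range T, ρ o' (i + 1) := by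
      have := hopt o; rwa [banditJ_const, banditJ_const] at this
    have h2 := ho o'
    have heq : ∑ i ∈ Finset.range T, ρ o (i + 1) = ∑ i ∈ Finset.range T, ρ o' (i + 1) :=
      le_antisymm h1 h2
    by_contra hne'
    fin_cases o <;> fin_cases o' <;> simp_all
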